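/- Let R₀, R₁, R₂, R₃ ≥ 1/2 be real numbers. The number of positive integers q admitting a decomposition q = b₁ b₂² c² d (with b₁ squarefree product of primes exactly dividing q, b₂ product of primes with square exact multiplicity, d squarefree, d | c) such that R₀ < b₁ ≤ 2R₀, R₁ < b₂ ≤ 2R₁, R₂ < c ≤ 2R₂, R₃ < d ≤ 2R₃ is O(R₀ R₁ R₂^{1/2} R₃^{1/2}), where the implied constant is absolute. -/

import Mathlib

open Finset

/-- The product of primes dividing `q` with exact multiplicity 1. -/
def partB1 (q : ℕ) : ℕ :=
  ∏ p ∈ q.primeFactors.filter (fun p => q.factorization p = 1), p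

/-- The product of primes dividing `q` with exact multiplicity 2. -/
def partB2 (q : ℕ) : ℕ :=
  ∏ p ∈ q.primeFactors.filter (fun p => q.factorization p = 2), p

/-- The product of primes `p` with `p^e ∥ q` for some odd `e ≥ 3`. -/
def partD (q : ℕ) : ℕ :=
  ∏ p ∈ q.primeFactors.filter
    (fun p => 3 ≤ q.factorization p ∧ Odd (q.factorization p)), p

section helpers

lemma factorization_prod_primepow (s : Finset ℕ) (hs : ∀ p ∈ s, p.Prime) (g : ℕ → ℕ)
    (r : ℕ) :
    (∏ p ∈ s, p ^ g p).factorization r = if r ∈ s then g r else 0 := by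
  rw [Nat.factorization_prod (fun p hp => pow_ne_zero _ (hs p hp).pos.ne')]
  rw [Finsupp.finset_sum_apply]
  have : ∀ p ∈ s, (p ^ g p).factorization r = if p = r then g p else 0 := by
    intro p hp
    rw [(hs p hp).factorization_pow, Finsupp.single_apply]
  rw [Finset.sum_congr rfl this, Finset.sum_ite_eq' s r g]

lemma factorization_prod_primes (s : Finset ℕ) (hs : ∀ p ∈ s, p.Prime) (r : ℕ) :
    (∏ p ∈ s, p).factorization r = if r ∈ s then 1 else 0 := by
  have := factorization_prod_primepow s hs (fun _ => 1) r
  simpa using this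

lemma prod_primes_ne_zero (s : Finset ℕ) (hs : ∀ p ∈ s, p.Prime) :
    (∏ p ∈ s, p) ≠ 0 :=
  Finset.prod_ne_zero_iff.mpr (fun p hp => (hs p hp).pos.ne')

lemma prime_dvd_prod_primes_iff (s : Finset ℕ) (hs : ∀ p ∈ s, p.Prime) {r : ℕ}
    (hr : r.Prime) : r ∣ ∏ p ∈ s, p ↔ r ∈ s := by
  rw [Nat.Prime.dvd_iff_one_le_factorization hr (prod_primes_ne_zero s hs),
    factorization_prod_primes s hs]
  split <;> simp_all

lemma squarefree_prod_primes (s : Finset ℕ) (hs : ∀ p ∈ s, p.Prime) :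
    Squarefree (∏ p ∈ s, p) := by
  rw [Nat.squarefree_iff_factorization_le_one (prod_primes_ne_zero s hs)]
  intro p
  rw [factorization_prod_primes s hs]
  split <;> simp

lemma extract (c d : ℕ) (hc : c ≠ 0) (hd : Squarefree d) (hdc : d ∣ c)
    (H : ∀ p : ℕ, p.Prime → ¬ p ∣ d → p ∣ c → 2 ≤ c.factorization p) :
    ∃ d₀ m a b : ℕ, 0 < d₀ ∧ 0 < m ∧ 0 < a ∧ 0 < b ∧ d₀ * m = d ∧
      c = d * d₀ * a ^ 2 * b ^ 3 := by
  have hd0 : d ≠ 0 := hd.ne_zero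
  set k := c / d with hkdef
  have hkc : d * k = c := Nat.mul_div_cancel' hdc
  have hk0 : k ≠ 0 := by
    intro h; rw [h, mul_zero] at hkc; exact hc hkc.symm
  have hdf : ∀ p : ℕ, p.Prime → d.factorization p = if p ∣ d then 1 else 0 := by
    intro p hp
    by_cases hpd : p ∣ d
    · rw [if_pos hpd]
      exact le_antisymm ((Nat.squarefree_iff_factorization_le_one hd0).mp hd p)
        ((Nat.Prime.dvd_iff_one_le_factorization hp hd0).mp hpd)
    · rw [if_neg hpd]
      exact Nat.factorization_eq_zero_of_not_dvd hpd
  have hkf : ∀ p : ℕ, k.factorization p = c.factorization p - d.factorization p := by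
    intro p
    rw [hkdef, Nat.factorization_div hdc, Finsupp.tsub_apply]
  set F₀ := k.primeFactors.filter (fun p => p ∣ d ∧ Odd (k.factorization p)) with hF₀def
  have hF₀primes : ∀ p ∈ F₀, p.Prime := fun p hp =>
    Nat.prime_of_mem_primeFactors (mem_filter.mp hp).1
  set d₀ := ∏ p ∈ F₀, p with hd₀def
  have hd₀0 : d₀ ≠ 0 := prod_primes_ne_zero _ hF₀primes
  have hd₀k : d₀ ∣ k := Finset.prod_primes_dvd k
    (fun p hp => (hF₀primes p hp).prime) (fun p hp => Nat.dvd_of_mem_primeFactors (mem_filter.mp hp).1)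
  have hd₀d : d₀ ∣ d := Finset.prod_primes_dvd d
    (fun p hp => (hF₀primes p hp).prime) (fun p hp => (mem_filter.mp hp).2.1)
  set s := k / d₀ with hsdef
  have hsk : d₀ * s = k := Nat.mul_div_cancel' hd₀k
  have hs0 : s ≠ 0 := by
    intro h; rw [h, mul_zero] at hsk; exact hk0 hsk.symm
  have hsf : ∀ p : ℕ, s.factorization p = k.factorization p - d₀.factorization p := by
    intro p
    rw [hsdef, Nat.factorization_div hd₀k, Finsupp.tsub_apply]
  have hd₀f : ∀ p : ℕ, d₀.factorization p = if p ∈ F₀ then 1 else 0 :=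
    factorization_prod_primes _ hF₀primes
  have hmemF₀ : ∀ p : ℕ, p.Prime → (p ∈ F₀ ↔ p ∣ k ∧ p ∣ d ∧ Odd (k.factorization p)) := by
    intro p hp
    simp [hF₀def, Nat.mem_primeFactors, hp, hk0, and_assoc]
  -- s is squarefull
  have hsfull : ∀ p : ℕ, p.Prime → p ∣ s → 2 ≤ s.factorization p := by
    intro p hp hps
    have hpk : p ∣ k := hps.trans (Nat.div_dvd_of_dvd hd₀k)
    have hpc : p ∣ c := hpk.trans ⟨d, by rw [← hkc, mul_comm]⟩
    have hσ1 : 1 ≤ s.factorization p := (Nat.Prime.dvd_iff_one_le_factorization hp hs0).mp hps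
    have hκ1 : 1 ≤ k.factorization p := (Nat.Prime.dvd_iff_one_le_factorization hp hk0).mp hpk
    by_cases hpd : p ∣ d
    · by_cases hodd : Odd (k.factorization p)
      · have hmem : p ∈ F₀ := (hmemF₀ p hp).mpr ⟨hpk, hpd, hodd⟩
        rw [hsf, hd₀f, if_pos hmem] at hσ1 ⊢
        rw [Nat.odd_iff] at hodd
        omega
      · have hmem : p ∉ F₀ := fun h => hodd ((hmemF₀ p hp).mp h).2.2
        rw [hsf, hd₀f, if_neg hmem] at hσ1 ⊢
        rw [Nat.not_odd_iff] at hodd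
        omega
    · have hmem : p ∉ F₀ := fun h => hpd ((hmemF₀ p hp).mp h).2.1
      have hc2 : 2 ≤ c.factorization p := H p hp hpd hpc
      have : k.factorization p = c.factorization p := by
        rw [hkf, hdf p hp, if_neg hpd]
        omega
      rw [hsf, hd₀f, if_neg hmem, this]
      omega
  set Fb := s.primeFactors.filter (fun p => Odd (s.factorization p)) with hFbdef
  have hFbprimes : ∀ p ∈ Fb, p.Prime := fun p hp =>
    Nat.prime_of_mem_primeFactors (mem_filter.mp hp).1
  set b := ∏ p ∈ Fb, p with hbdef
  have hb0 : b ≠ 0 := prod_primes_ne_zero _ hFbprimes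
  set α : ℕ → ℕ := fun p =>
    if Odd (s.factorization p) then (s.factorization p - 3) / 2 else s.factorization p / 2
    with hαdef
  set a := ∏ p ∈ s.primeFactors, p ^ α p with hadef
  have ha0 : a ≠ 0 :=
    Finset.prod_ne_zero_iff.mpr
      (fun p hp => pow_ne_zero _ (Nat.prime_of_mem_primeFactors hp).pos.ne')
  have haf : ∀ r : ℕ, a.factorization r = if r ∈ s.primeFactors then α r else 0 :=
    factorization_prod_primepow _ (fun p hp => Nat.prime_of_mem_primeFactors hp) α
  have hbf : ∀ r : ℕ, b.factorization r = if r ∈ Fb then 1 else 0 :=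
    factorization_prod_primes _ hFbprimes
  -- main identity  k = d₀ * a^2 * b^3
  have hkey : k = d₀ * a ^ 2 * b ^ 3 := by
    refine Nat.eq_of_factorization_eq hk0 (by positivity) (fun p => ?_)
    by_cases hp : p.Prime
    · have hrhs : (d₀ * a ^ 2 * b ^ 3).factorization p =
          d₀.factorization p + 2 * a.factorization p + 3 * b.factorization p := by
        rw [Nat.factorization_mul (mul_ne_zero hd₀0 (pow_ne_zero _ ha0)) (pow_ne_zero _ hb0),
          Nat.factorization_mul hd₀0 (pow_ne_zero _ ha0), Nat.factorization_pow,
          Nat.factorization_pow]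
        simp [mul_comm]
      rw [hrhs, hd₀f, haf, hbf]
      have hmemS : p ∈ s.primeFactors ↔ 1 ≤ s.factorization p := by
        constructor
        · intro h
          exact (Nat.Prime.dvd_iff_one_le_factorization hp hs0).mp (Nat.dvd_of_mem_primeFactors h)
        · intro h
          exact Nat.mem_primeFactors.mpr ⟨hp, (Nat.Prime.dvd_iff_one_le_factorization hp hs0).mpr h, hs0⟩
      have hmemFb : p ∈ Fb ↔ 1 ≤ s.factorization p ∧ Odd (s.factorization p) := by
        rw [hFbdef, mem_filter, hmemS]
      have hσκ : s.factorization p = k.factorization p - (if p ∈ F₀ then 1 else 0) := by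
        rw [hsf, hd₀f]
      have hfull' : 1 ≤ s.factorization p → Odd (s.factorization p) →
          3 ≤ s.factorization p := by
        intro h1 hodd
        have := hsfull p hp ((Nat.Prime.dvd_iff_one_le_factorization hp hs0).mpr h1)
        rw [Nat.odd_iff] at hodd
        omega
      by_cases hmem : p ∈ F₀
      · have hκodd : Odd (k.factorization p) := ((hmemF₀ p hp).mp hmem).2.2
        have hκ1 : 1 ≤ k.factorization p :=
          (Nat.Prime.dvd_iff_one_le_factorization hp hk0).mp ((hmemF₀ p hp).mp hmem).1
        rw [if_pos hmem] at hσκ ⊢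
        have hσeven : ¬ Odd (s.factorization p) := by
          rw [Nat.not_odd_iff]; rw [Nat.odd_iff] at hκodd; omega
        by_cases hσ1 : 1 ≤ s.factorization p
        · rw [if_pos (hmemS.mpr hσ1),
            if_neg (show p ∉ Fb from fun hh => hσeven (hmemFb.mp hh).2)]
          simp only [hαdef, if_neg hσeven]
          rw [Nat.odd_iff] at hκodd
          omega
        · rw [if_neg (show p ∉ s.primeFactors from fun hh => hσ1 (hmemS.mp hh)),
            if_neg (show p ∉ Fb from fun hh => hσ1 (hmemFb.mp hh).1)]
          rw [Nat.odd_iff] at hκodd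
          omega
      · rw [if_neg hmem] at hσκ ⊢
        have hσκ' : s.factorization p = k.factorization p := by omega
        by_cases hκ0 : k.factorization p = 0
        · rw [if_neg (show p ∉ s.primeFactors from fun hh => by
              have := hmemS.mp hh; omega),
            if_neg (show p ∉ Fb from fun hh => by
              have := (hmemFb.mp hh).1; omega)]
          omega
        · by_cases hodd : Odd (s.factorization p)
          · have h3 : 3 ≤ s.factorization p := hfull' (by omega) hodd
            rw [if_pos (hmemS.mpr (by omega)), if_pos (hmemFb.mpr ⟨by omega, hodd⟩)]
            simp only [hαdef, if_pos hodd]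
            rw [Nat.odd_iff] at hodd
            omega
          · rw [if_pos (hmemS.mpr (by omega)),
              if_neg (show p ∉ Fb from fun hh => hodd (hmemFb.mp hh).2)]
            simp only [hαdef, if_neg hodd]
            rw [Nat.not_odd_iff] at hodd
            omega
    · rw [Nat.factorization_eq_zero_of_not_prime _ hp,
        Nat.factorization_eq_zero_of_not_prime _ hp]
  obtain ⟨m, hm⟩ := hd₀d
  have hm0 : 0 < m := by
    rcases Nat.eq_zero_or_pos m with h | h
    · exfalso; exact hd0 (by rw [hm, h, mul_zero])
    · exact h
  refine ⟨d₀, m, a, b, Nat.pos_of_ne_zero hd₀0, hm0, Nat.pos_of_ne_zero ha0,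
    Nat.pos_of_ne_zero hb0, hm.symm, ?_⟩
  rw [← hkc, hkey]; ring


lemma sum_inv_sqrt (N : ℕ) :
    ∑ m ∈ Finset.Icc 1 N, (1 : ℝ) / Real.sqrt m ≤ 2 * Real.sqrt N := by
  induction N with
  | zero => simp
  | succ n ih =>
    rw [Finset.sum_Icc_succ_top (by omega : 1 ≤ n + 1)]
    have hs : Real.sqrt n ^ 2 = (n : ℝ) := Real.sq_sqrt (by positivity)
    have ht : Real.sqrt ((n : ℝ) + 1) ^ 2 = (n : ℝ) + 1 := Real.sq_sqrt (by positivity)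
    have hspos : 0 ≤ Real.sqrt n := Real.sqrt_nonneg _
    have htpos : 0 < Real.sqrt ((n : ℝ) + 1) := Real.sqrt_pos.mpr (by positivity)
    have key : 1 / Real.sqrt ((n : ℝ) + 1) ≤ 2 * Real.sqrt ((n : ℝ) + 1) - 2 * Real.sqrt n := by
      rw [div_le_iff₀ htpos]
      nlinarith [sq_nonneg (Real.sqrt ((n : ℝ) + 1) - Real.sqrt n)]
    push_cast
    push_cast at ih
    linarith

lemma sum_inv_pow32 (N : ℕ) :
    ∑ m ∈ Finset.Icc 1 N, (1 : ℝ) / (m * Real.sqrt m) ≤ 3 := by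
  have main : ∀ N : ℕ, 1 ≤ N →
      ∑ m ∈ Finset.Icc 1 N, (1 : ℝ) / (m * Real.sqrt m) ≤ 3 - 2 / Real.sqrt N := by
    intro N hN
    induction N with
    | zero => omega
    | succ n ih =>
      rcases Nat.eq_zero_or_pos n with hn | hn
      · subst hn; norm_num
      · have ih' := ih hn
        rw [Finset.sum_Icc_succ_top (by omega : 1 ≤ n + 1)]
        have hs : Real.sqrt n ^ 2 = (n : ℝ) := Real.sq_sqrt (by positivity)
        have ht : Real.sqrt ((n : ℝ) + 1) ^ 2 = (n : ℝ) + 1 := Real.sq_sqrt (by positivity)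
        have hspos : 0 < Real.sqrt n := Real.sqrt_pos.mpr (by positivity)
        have htpos : 0 < Real.sqrt ((n : ℝ) + 1) := Real.sqrt_pos.mpr (by positivity)
        have hn1 : (1 : ℝ) ≤ (n : ℝ) := by exact_mod_cast hn
        have key : 1 / (((n : ℝ) + 1) * Real.sqrt ((n : ℝ) + 1)) ≤
            2 / Real.sqrt n - 2 / Real.sqrt ((n : ℝ) + 1) := by
          rw [div_sub_div _ _ (ne_of_gt hspos) (ne_of_gt htpos),
            div_le_div_iff₀ (by positivity) (by positivity)]
          have hst : Real.sqrt n ≤ Real.sqrt ((n : ℝ) + 1) := by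
            apply Real.sqrt_le_sqrt; linarith
          nlinarith [sq_nonneg (Real.sqrt ((n : ℝ) + 1) - Real.sqrt n), mul_pos hspos htpos]
        push_cast
        push_cast at ih'
        linarith
  rcases Nat.eq_zero_or_pos N with h | h
  · subst h; simp
  · have := main N h
    have : (0:ℝ) < 2 / Real.sqrt N := by positivity
    linarith [main N h]

lemma T2_card_bound (N₂ N₃ : ℕ) (R₂ R₃ : ℝ) (hR₂ : 0 < R₂) (hR₃ : 0 < R₃)
    (h2 : (N₂ : ℝ) ≤ 2 * R₂) (h3 : (N₃ : ℝ) ≤ 2 * R₃) :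
    (((Finset.Icc 1 N₃ ×ˢ Finset.Icc 1 N₃ ×ˢ Finset.Icc 1 N₂ ×ˢ Finset.Icc 1 N₂).filter
        (fun x : ℕ × ℕ × ℕ × ℕ => x.1 * x.2.1 ≤ N₃ ∧
          x.1 ^ 2 * x.2.1 * x.2.2.1 ^ 2 * x.2.2.2 ^ 3 ≤ N₂)).card : ℝ) ≤
      36 * Real.sqrt R₂ * Real.sqrt R₃ := by
  classical
  set K := Real.sqrt (2 * R₂) with hK
  have hKpos : 0 ≤ K := Real.sqrt_nonneg _
  set T₂ := (Finset.Icc 1 N₃ ×ˢ Finset.Icc 1 N₃ ×ˢ Finset.Icc 1 N₂ ×ˢ Finset.Icc 1 N₂).filter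
        (fun x : ℕ × ℕ × ℕ × ℕ => x.1 * x.2.1 ≤ N₃ ∧
          x.1 ^ 2 * x.2.1 * x.2.2.1 ^ 2 * x.2.2.2 ^ 3 ≤ N₂) with hT₂
  set t := Finset.Icc 1 N₃ ×ˢ Finset.Icc 1 N₃ ×ˢ Finset.Icc 1 N₂ with ht
  set f : ℕ × ℕ × ℕ × ℕ → ℕ × ℕ × ℕ := fun x => (x.1, x.2.1, x.2.2.2) with hf
  have hmaps : ∀ x ∈ T₂, f x ∈ t := by
    intro x hx
    rw [hT₂, mem_filter] at hx
    obtain ⟨hbox, -⟩ := hx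
    simp only [ht, hf, mem_product] at hbox ⊢
    exact ⟨hbox.1, hbox.2.1, hbox.2.2.2⟩
  have hcard := Finset.card_eq_sum_card_fiberwise hmaps
  set W : ℕ × ℕ × ℕ → ℝ := fun y =>
    if y.1 * y.2.1 ≤ N₃ then
      K / ((y.1 : ℝ) * Real.sqrt y.2.1 * ((y.2.2 : ℝ) * Real.sqrt y.2.2)) else 0 with hW
  have fiber_bound : ∀ y ∈ t, ((T₂.filter (fun x => f x = y)).card : ℝ) ≤ W y := by
    intro y hy
    simp only [ht, mem_product] at hy
    obtain ⟨hy1, hy2, hy3⟩ := hy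
    rw [mem_Icc] at hy1 hy2 hy3
    by_cases hcond : y.1 * y.2.1 ≤ N₃
    · rw [hW]
      simp only [if_pos hcond]
      have hd₀pos : (0:ℝ) < y.1 := by exact_mod_cast hy1.1
      have hmpos : (0:ℝ) < y.2.1 := by exact_mod_cast hy2.1
      have hbpos : (0:ℝ) < y.2.2 := by exact_mod_cast hy3.1
      have hDpos : (0:ℝ) < (y.1 : ℝ) * Real.sqrt y.2.1 * ((y.2.2 : ℝ) * Real.sqrt y.2.2) := by
        positivity
      set w : ℝ := K / ((y.1 : ℝ) * Real.sqrt y.2.1 * ((y.2.2 : ℝ) * Real.sqrt y.2.2)) with hw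
      have hwnn : 0 ≤ w := by positivity
      have hsub : (T₂.filter (fun x => f x = y)).card ≤ (Finset.Icc 1 ⌊w⌋₊).card := by
        apply Finset.card_le_card_of_injOn (fun x => x.2.2.1)
        · intro x hx
          rw [mem_coe, mem_filter, hT₂, mem_filter] at hx
          obtain ⟨⟨hbox, hP1, hP2⟩, hfx⟩ := hx
          simp only [mem_product, mem_Icc] at hbox
          have ha1 : 1 ≤ x.2.2.1 := hbox.2.2.1.1
          rw [mem_coe, mem_Icc]
          refine ⟨ha1, Nat.le_floor ?_⟩
          have hx1 : x.1 = y.1 := congrArg Prod.fst hfx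
          have hx2 : x.2.1 = y.2.1 := congrArg (fun z => z.2.1) hfx
          have hx3 : x.2.2.2 = y.2.2 := congrArg (fun z => z.2.2) hfx
          rw [hx1, hx2, hx3] at hP2
          have hreal : (y.1 : ℝ) ^ 2 * y.2.1 * (x.2.2.1 : ℝ) ^ 2 * (y.2.2 : ℝ) ^ 3 ≤ 2 * R₂ := by
            calc (y.1 : ℝ) ^ 2 * y.2.1 * (x.2.2.1 : ℝ) ^ 2 * (y.2.2 : ℝ) ^ 3
                = ((y.1 ^ 2 * y.2.1 * x.2.2.1 ^ 2 * y.2.2 ^ 3 : ℕ) : ℝ) := by push_cast; ring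
              _ ≤ (N₂ : ℝ) := by exact_mod_cast hP2
              _ ≤ 2 * R₂ := h2
          have hprod : (x.2.2.1 : ℝ) * ((y.1 : ℝ) * Real.sqrt y.2.1 * ((y.2.2 : ℝ) * Real.sqrt y.2.2)) ≤ K := by
            rw [hK]
            apply Real.le_sqrt_of_sq_le
            have hsm : Real.sqrt (y.2.1 : ℝ) ^ 2 = (y.2.1 : ℝ) := Real.sq_sqrt hmpos.le
            have hsb : Real.sqrt (y.2.2 : ℝ) ^ 2 = (y.2.2 : ℝ) := Real.sq_sqrt hbpos.le
            calc ((x.2.2.1 : ℝ) * ((y.1 : ℝ) * Real.sqrt y.2.1 * ((y.2.2 : ℝ) * Real.sqrt y.2.2))) ^ 2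
                = (y.1 : ℝ) ^ 2 * (Real.sqrt (y.2.1:ℝ) ^ 2) * (x.2.2.1 : ℝ) ^ 2 *
                    ((y.2.2 : ℝ) ^ 2 * Real.sqrt (y.2.2:ℝ) ^ 2) := by ring
              _ = (y.1 : ℝ) ^ 2 * y.2.1 * (x.2.2.1 : ℝ) ^ 2 * (y.2.2 : ℝ) ^ 3 := by
                  rw [hsm, hsb]; ring
              _ ≤ 2 * R₂ := hreal
          rw [hw, le_div_iff₀ hDpos]
          exact hprod
        · intro x hx x' hx' hxx
          rw [mem_coe, mem_filter] at hx hx'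
          have h1 : x.1 = x'.1 := by
            rw [congrArg Prod.fst hx.2, congrArg Prod.fst hx'.2]
          have h2' : x.2.1 = x'.2.1 := by
            rw [congrArg (fun z => z.2.1) hx.2, congrArg (fun z => z.2.1) hx'.2]
          have h4 : x.2.2.2 = x'.2.2.2 := by
            rw [congrArg (fun z => z.2.2) hx.2, congrArg (fun z => z.2.2) hx'.2]
          exact Prod.ext h1 (Prod.ext h2' (Prod.ext hxx h4))
      calc ((T₂.filter (fun x => f x = y)).card : ℝ)
          ≤ ((Finset.Icc 1 ⌊w⌋₊).card : ℝ) := by exact_mod_cast hsub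
        _ = (⌊w⌋₊ : ℝ) := by rw [Nat.card_Icc]; simp
        _ ≤ w := Nat.floor_le hwnn
    · have : (T₂.filter (fun x => f x = y)) = ∅ := by
        rw [Finset.eq_empty_iff_forall_notMem]
        intro x hx
        rw [mem_filter, hT₂, mem_filter] at hx
        obtain ⟨⟨-, hP1, -⟩, hfx⟩ := hx
        apply hcond
        rw [← congrArg Prod.fst hfx, ← congrArg (fun z => z.2.1) hfx]
        exact hP1
      rw [this, hW]
      simp [hcond]
  -- now sum W over t
  have hsumW : ∑ y ∈ t, W y ≤ 36 * Real.sqrt R₂ * Real.sqrt R₃ := by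
    rw [ht, Finset.sum_product]
    have hsp : ∀ d₀ : ℕ, ∑ y ∈ Finset.Icc 1 N₃ ×ˢ Finset.Icc 1 N₂, W (d₀, y) =
        ∑ m ∈ Finset.Icc 1 N₃, ∑ b ∈ Finset.Icc 1 N₂, W (d₀, m, b) :=
      fun d₀ => Finset.sum_product _ _ _
    rw [Finset.sum_congr rfl (fun d₀ _ => hsp d₀)]
    -- Σ_{d₀} Σ_{m} Σ_{b} W (d₀, m, b)
    have inner : ∀ d₀ ∈ Finset.Icc 1 N₃, ∀ m ∈ Finset.Icc 1 N₃,
        ∑ b ∈ Finset.Icc 1 N₂, W (d₀, m, b) ≤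
          (if d₀ * m ≤ N₃ then K / ((d₀ : ℝ) * Real.sqrt m) else 0) * 3 := by
      intro d₀ hd₀ m hm
      have heq : ∀ b ∈ Finset.Icc 1 N₂, W (d₀, m, b) =
          (if d₀ * m ≤ N₃ then K / ((d₀ : ℝ) * Real.sqrt m) else 0) * (1 / ((b:ℝ) * Real.sqrt b)) := by
        intro b hb
        rw [mem_Icc] at hb
        have hbpos : (0:ℝ) < b := by exact_mod_cast hb.1
        simp only [hW]
        by_cases h : d₀ * m ≤ N₃
        · rw [if_pos h, if_pos h, div_mul_div_comm, mul_one]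
        · rw [if_neg h, if_neg h, zero_mul]
      rw [Finset.sum_congr rfl heq, ← Finset.mul_sum]
      have hnn : 0 ≤ (if d₀ * m ≤ N₃ then K / ((d₀ : ℝ) * Real.sqrt m) else 0) := by
        split_ifs with h
        · have h1 : 1 ≤ d₀ := (mem_Icc.mp hd₀).1
          have h1m : 1 ≤ m := (mem_Icc.mp hm).1
          positivity
        · exact le_refl _
      exact mul_le_mul_of_nonneg_left (sum_inv_pow32 N₂) hnn
    have step1 : ∀ d₀ ∈ Finset.Icc 1 N₃,
        ∑ m ∈ Finset.Icc 1 N₃, ∑ b ∈ Finset.Icc 1 N₂, W (d₀, m, b) ≤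
          (6 * K * Real.sqrt (2 * R₃)) * (1 / ((d₀ : ℝ) * Real.sqrt d₀)) := by
      intro d₀ hd₀
      have hd₀1 : 1 ≤ d₀ := (mem_Icc.mp hd₀).1
      have hd₀pos : (0:ℝ) < d₀ := by exact_mod_cast hd₀1
      have hsd₀pos : (0:ℝ) < Real.sqrt d₀ := Real.sqrt_pos.mpr hd₀pos
      have hfilter : (Finset.Icc 1 N₃).filter (fun m => d₀ * m ≤ N₃) =
          Finset.Icc 1 (N₃ / d₀) := by
        ext m
        simp only [mem_filter, mem_Icc]
        constructor
        · rintro ⟨⟨hm1, hm2⟩, hm3⟩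
          exact ⟨hm1, (Nat.le_div_iff_mul_le (by omega)).mpr (by rwa [mul_comm])⟩
        · rintro ⟨hm1, hm2⟩
          have hm3 : m * d₀ ≤ N₃ := (Nat.le_div_iff_mul_le (by omega)).mp hm2
          have hm4 : m ≤ N₃ := le_trans (Nat.le_mul_of_pos_right m (by omega)) hm3
          exact ⟨⟨hm1, hm4⟩, by rwa [mul_comm] at hm3⟩
      have hA : ∑ m ∈ Finset.Icc 1 N₃,
            (if d₀ * m ≤ N₃ then K / ((d₀ : ℝ) * Real.sqrt m) else 0) =
          ∑ m ∈ Finset.Icc 1 (N₃ / d₀), K / ((d₀ : ℝ) * Real.sqrt m) := by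
        rw [← hfilter, Finset.sum_filter]
      have hA2 : ∑ m ∈ Finset.Icc 1 (N₃ / d₀), K / ((d₀ : ℝ) * Real.sqrt m) =
          (K / d₀) * ∑ m ∈ Finset.Icc 1 (N₃ / d₀), (1 : ℝ) / Real.sqrt m := by
        rw [Finset.mul_sum]
        apply Finset.sum_congr rfl
        intro m hm
        have hm1 : 1 ≤ m := (mem_Icc.mp hm).1
        have hmpos : (0:ℝ) < m := by exact_mod_cast hm1
        have : (0:ℝ) < Real.sqrt m := Real.sqrt_pos.mpr hmpos
        field_simp
      have hsqrtM : Real.sqrt ((N₃ / d₀ : ℕ) : ℝ) ≤ Real.sqrt (2 * R₃) / Real.sqrt d₀ := by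
        rw [← Real.sqrt_div (by linarith : (0:ℝ) ≤ 2 * R₃) ((d₀ : ℝ))]
        apply Real.sqrt_le_sqrt
        calc ((N₃ / d₀ : ℕ) : ℝ) ≤ (N₃ : ℝ) / (d₀ : ℝ) := Nat.cast_div_le
          _ ≤ 2 * R₃ / (d₀ : ℝ) := by gcongr
      have hKd : (0:ℝ) ≤ K / (d₀ : ℝ) := by positivity
      calc ∑ m ∈ Finset.Icc 1 N₃, ∑ b ∈ Finset.Icc 1 N₂, W (d₀, m, b)
          ≤ ∑ m ∈ Finset.Icc 1 N₃,
              (if d₀ * m ≤ N₃ then K / ((d₀ : ℝ) * Real.sqrt m) else 0) * 3 :=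
            Finset.sum_le_sum (fun m hm => inner d₀ hd₀ m hm)
        _ = (∑ m ∈ Finset.Icc 1 N₃,
              if d₀ * m ≤ N₃ then K / ((d₀ : ℝ) * Real.sqrt m) else 0) * 3 :=
            (Finset.sum_mul _ _ _).symm
        _ = ((K / d₀) * ∑ m ∈ Finset.Icc 1 (N₃ / d₀), (1 : ℝ) / Real.sqrt m) * 3 := by
            rw [hA, hA2]
        _ ≤ ((K / d₀) * (2 * Real.sqrt ((N₃ / d₀ : ℕ) : ℝ))) * 3 := by
            exact mul_le_mul_of_nonneg_right
              (mul_le_mul_of_nonneg_left (sum_inv_sqrt (N₃ / d₀)) hKd) (by norm_num)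
        _ ≤ ((K / d₀) * (2 * (Real.sqrt (2 * R₃) / Real.sqrt d₀))) * 3 := by
            exact mul_le_mul_of_nonneg_right
              (mul_le_mul_of_nonneg_left (by linarith [hsqrtM]) hKd) (by norm_num)
        _ = (6 * K * Real.sqrt (2 * R₃)) * (1 / ((d₀ : ℝ) * Real.sqrt d₀)) := by
            field_simp
            ring
    calc ∑ d₀ ∈ Finset.Icc 1 N₃, ∑ m ∈ Finset.Icc 1 N₃, ∑ b ∈ Finset.Icc 1 N₂, W (d₀, m, b)
        ≤ ∑ d₀ ∈ Finset.Icc 1 N₃,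
            (6 * K * Real.sqrt (2 * R₃)) * (1 / ((d₀ : ℝ) * Real.sqrt d₀)) :=
          Finset.sum_le_sum step1
      _ = (6 * K * Real.sqrt (2 * R₃)) *
            ∑ d₀ ∈ Finset.Icc 1 N₃, (1 : ℝ) / ((d₀ : ℝ) * Real.sqrt d₀) := by
          rw [Finset.mul_sum]
      _ ≤ (6 * K * Real.sqrt (2 * R₃)) * 3 :=
          mul_le_mul_of_nonneg_left (sum_inv_pow32 N₃) (by positivity)
      _ = 36 * Real.sqrt R₂ * Real.sqrt R₃ := by
          have h22 : Real.sqrt 2 * Real.sqrt 2 = 2 := Real.mul_self_sqrt (by norm_num)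
          rw [hK, Real.sqrt_mul (by norm_num : (0:ℝ) ≤ 2) R₂,
            Real.sqrt_mul (by norm_num : (0:ℝ) ≤ 2) R₃]
          linear_combination (18 * Real.sqrt R₂ * Real.sqrt R₃) * h22
  calc (T₂.card : ℝ) = ∑ y ∈ t, ((T₂.filter (fun x => f x = y)).card : ℝ) := by
        rw [hcard, Nat.cast_sum]
    _ ≤ ∑ y ∈ t, W y := Finset.sum_le_sum fiber_bound
    _ ≤ 36 * Real.sqrt R₂ * Real.sqrt R₃ := hsumW

end helpers

/-- The number of positive integers `q` whose decomposition `q = b₁ b₂² c² d`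
lies in the dyadic boxes `R₀ < b₁ ≤ 2R₀`, `R₁ < b₂ ≤ 2R₁`, `R₂ < c ≤ 2R₂`,
`R₃ < d ≤ 2R₃` is `O(R₀ R₁ R₂^{1/2} R₃^{1/2})`, with an absolute implied constant. -/
theorem count_dyadic_decomposition :
    ∃ C : ℝ, 0 < C ∧ ∀ R₀ R₁ R₂ R₃ : ℝ,
      1/2 ≤ R₀ → 1/2 ≤ R₁ → 1/2 ≤ R₂ → 1/2 ≤ R₃ →
      ({q : ℕ | 0 < q ∧ ∃ c : ℕ,
          q = partB1 q * (partB2 q) ^ 2 * c ^ 2 * partD q ∧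
          partD q ∣ c ∧
          R₀ < partB1 q ∧ (partB1 q : ℝ) ≤ 2 * R₀ ∧
          R₁ < partB2 q ∧ (partB2 q : ℝ) ≤ 2 * R₁ ∧
          R₂ < c ∧ (c : ℝ) ≤ 2 * R₂ ∧
          R₃ < partD q ∧ (partD q : ℝ) ≤ 2 * R₃}).ncard ≤
        C * R₀ * R₁ * R₂ ^ ((1 : ℝ)/2) * R₃ ^ ((1 : ℝ)/2) := by
  classical
  refine ⟨144, by norm_num, ?_⟩
  intro R₀ R₁ R₂ R₃ hR₀ hR₁ hR₂ hR₃
  set S := {q : ℕ | 0 < q ∧ ∃ c : ℕ,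
      q = partB1 q * (partB2 q) ^ 2 * c ^ 2 * partD q ∧
      partD q ∣ c ∧
      R₀ < partB1 q ∧ (partB1 q : ℝ) ≤ 2 * R₀ ∧
      R₁ < partB2 q ∧ (partB2 q : ℝ) ≤ 2 * R₁ ∧
      R₂ < c ∧ (c : ℝ) ≤ 2 * R₂ ∧
      R₃ < partD q ∧ (partD q : ℝ) ≤ 2 * R₃} with hS
  set N₀ := ⌊2 * R₀⌋₊ with hN₀
  set N₁ := ⌊2 * R₁⌋₊ with hN₁
  set N₂ := ⌊2 * R₂⌋₊ with hN₂
  set N₃ := ⌊2 * R₃⌋₊ with hN₃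
  set T₂ := (Finset.Icc 1 N₃ ×ˢ Finset.Icc 1 N₃ ×ˢ Finset.Icc 1 N₂ ×ˢ Finset.Icc 1 N₂).filter
      (fun x : ℕ × ℕ × ℕ × ℕ => x.1 * x.2.1 ≤ N₃ ∧
        x.1 ^ 2 * x.2.1 * x.2.2.1 ^ 2 * x.2.2.2 ^ 3 ≤ N₂) with hT₂def
  set T := Finset.Icc 1 N₀ ×ˢ Finset.Icc 1 N₁ ×ˢ T₂ with hT
  set recon : ℕ × ℕ × ℕ × ℕ × ℕ × ℕ → ℕ := fun x =>
    x.1 * x.2.1 ^ 2 * (x.2.2.1 ^ 2 * x.2.2.2.1 * x.2.2.2.2.1 ^ 2 * x.2.2.2.2.2 ^ 3) ^ 2 *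
      (x.2.2.1 * x.2.2.2.1) with hrecon
  -- every q in S is recon of an element of T
  have key : ∀ q ∈ S, ∃ x ∈ T, recon x = q := by
    intro q hq
    obtain ⟨hq0, c, hqeq, hDc, hb₁lo, hb₁hi, hb₂lo, hb₂hi, hclo, hchi, hdlo, hdhi⟩ := hq
    have hq0' : q ≠ 0 := hq0.ne'
    have hcpos : 0 < c := by
      have : (0 : ℝ) < (c : ℝ) := by linarith
      exact_mod_cast this
    have hc0 : c ≠ 0 := hcpos.ne'
    -- basic facts about the parts
    have hprimes1 : ∀ p ∈ q.primeFactors.filter (fun p => q.factorization p = 1), p.Prime :=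
      fun p hp => Nat.prime_of_mem_primeFactors (mem_filter.mp hp).1
    have hprimes2 : ∀ p ∈ q.primeFactors.filter (fun p => q.factorization p = 2), p.Prime :=
      fun p hp => Nat.prime_of_mem_primeFactors (mem_filter.mp hp).1
    have hprimesD : ∀ p ∈ q.primeFactors.filter
        (fun p => 3 ≤ q.factorization p ∧ Odd (q.factorization p)), p.Prime :=
      fun p hp => Nat.prime_of_mem_primeFactors (mem_filter.mp hp).1
    have hB1ne : partB1 q ≠ 0 := prod_primes_ne_zero _ hprimes1
    have hB2ne : partB2 q ≠ 0 := prod_primes_ne_zero _ hprimes2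
    have hDne : partD q ≠ 0 := prod_primes_ne_zero _ hprimesD
    have hDsf : Squarefree (partD q) := squarefree_prod_primes _ hprimesD
    -- the factorization identity
    have hfac : ∀ p : ℕ, q.factorization p =
        (partB1 q).factorization p + 2 * (partB2 q).factorization p +
          2 * c.factorization p + (partD q).factorization p := by
      intro p
      conv_lhs => rw [hqeq]
      rw [Nat.factorization_mul (by positivity) hDne,
        Nat.factorization_mul (by positivity) (pow_ne_zero _ hc0),
        Nat.factorization_mul hB1ne (pow_ne_zero _ hB2ne),
        Nat.factorization_pow, Nat.factorization_pow]
      simp only [Finsupp.add_apply, Finsupp.smul_apply, smul_eq_mul]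
      try ring
    -- the squarefull property of c away from partD q
    have H1 : ∀ p : ℕ, p.Prime → ¬ p ∣ partD q → p ∣ c → 2 ≤ c.factorization p := by
      intro p hp hpD hpc
      have hcq : c ∣ q := by
        refine ⟨partB1 q * partB2 q ^ 2 * c * partD q, ?_⟩
        conv_lhs => rw [hqeq]
        ring
      have hpq : p ∣ q := hpc.trans hcq
      have hγ : 1 ≤ c.factorization p := (Nat.Prime.dvd_iff_one_le_factorization hp hc0).mp hpc
      have hD0 : (partD q).factorization p = 0 := Nat.factorization_eq_zero_of_not_dvd hpD
      have hpmem : p ∈ q.primeFactors := Nat.mem_primeFactors.mpr ⟨hp, hpq, hq0'⟩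
      have hmem1 : p ∈ q.primeFactors.filter (fun p => q.factorization p = 1) ↔
          q.factorization p = 1 := by
        rw [mem_filter]; exact and_iff_right hpmem
      have hmem2 : p ∈ q.primeFactors.filter (fun p => q.factorization p = 2) ↔
          q.factorization p = 2 := by
        rw [mem_filter]; exact and_iff_right hpmem
      have hB1v : (partB1 q).factorization p = if q.factorization p = 1 then 1 else 0 := by
        rw [partB1, factorization_prod_primes _ hprimes1, if_congr hmem1 rfl rfl]
      have hB2v : (partB2 q).factorization p = if q.factorization p = 2 then 1 else 0 := by
        rw [partB2, factorization_prod_primes _ hprimes2, if_congr hmem2 rfl rfl]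
      have he := hfac p
      rw [hB1v, hB2v, hD0] at he
      by_cases h1 : q.factorization p = 1
      · rw [if_pos h1, if_neg (by omega)] at he; omega
      · by_cases h2 : q.factorization p = 2
        · rw [if_neg h1, if_pos h2] at he; omega
        · rw [if_neg h1, if_neg h2] at he; omega
    -- extract the structured decomposition of c
    obtain ⟨d₀, m, a, b, hd₀pos, hmpos, hapos, hbpos, hdm, hceq⟩ :=
      extract c (partD q) hc0 hDsf hDc H1
    -- bounds
    have hDN₃ : partD q ≤ N₃ := Nat.le_floor hdhi
    have hcN₂ : c ≤ N₂ := Nat.le_floor hchi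
    have hdmN₃ : d₀ * m ≤ N₃ := by rw [hdm]; exact hDN₃
    have hd₀N₃ : d₀ ≤ N₃ := le_trans (Nat.le_mul_of_pos_right d₀ hmpos) hdmN₃
    have hmN₃ : m ≤ N₃ := le_trans (Nat.le_mul_of_pos_left m hd₀pos) hdmN₃
    have hceq' : d₀ ^ 2 * m * a ^ 2 * b ^ 3 = c := by
      rw [hceq, ← hdm]; ring
    have hcc : d₀ ^ 2 * m * a ^ 2 * b ^ 3 ≤ N₂ := by rw [hceq']; exact hcN₂
    have haN₂ : a ≤ N₂ := by
      refine le_trans ?_ hcN₂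
      have ha2 : a ^ 2 ∣ c := ⟨partD q * d₀ * b ^ 3, by rw [hceq]; ring⟩
      exact le_trans (Nat.le_self_pow (by norm_num) a) (Nat.le_of_dvd hcpos ha2)
    have hbN₂ : b ≤ N₂ := by
      refine le_trans ?_ hcN₂
      have hb3 : b ^ 3 ∣ c := ⟨partD q * d₀ * a ^ 2, by rw [hceq]; ring⟩
      exact le_trans (Nat.le_self_pow (by norm_num) b) (Nat.le_of_dvd hcpos hb3)
    refine ⟨(partB1 q, partB2 q, d₀, m, a, b), ?_, ?_⟩
    · rw [hT]
      simp only [mem_product, mem_Icc, hT₂def, mem_filter]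
      refine ⟨⟨Nat.pos_of_ne_zero hB1ne, Nat.le_floor hb₁hi⟩,
        ⟨Nat.pos_of_ne_zero hB2ne, Nat.le_floor hb₂hi⟩,
        ⟨⟨hd₀pos, hd₀N₃⟩, ⟨hmpos, hmN₃⟩, ⟨hapos, haN₂⟩, ⟨hbpos, hbN₂⟩⟩, hdmN₃, hcc⟩
    · show partB1 q * partB2 q ^ 2 * (d₀ ^ 2 * m * a ^ 2 * b ^ 3) ^ 2 * (d₀ * m) = q
      rw [hceq', hdm, ← hqeq]
  -- cardinality chain
  have hsub : S ⊆ recon '' ↑T := by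
    intro q hq
    obtain ⟨x, hxT, hxq⟩ := key q hq
    exact ⟨x, hxT, hxq⟩
  have hn1 : S.ncard ≤ (recon '' ↑T).ncard :=
    Set.ncard_le_ncard hsub ((T.finite_toSet).image _)
  have hn2 : (recon '' ↑T).ncard ≤ T.card := by
    have h := Set.ncard_image_le (s := (↑T : Set (ℕ × ℕ × ℕ × ℕ × ℕ × ℕ))) (f := recon)
      T.finite_toSet
    rwa [Set.ncard_coe_finset] at h
  have hcardT : T.card = N₀ * (N₁ * T₂.card) := by
    rw [hT, Finset.card_product, Finset.card_product, Nat.card_Icc, Nat.card_Icc]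
    simp only [Nat.add_sub_cancel]
  -- real bounds
  have hT₂R : (T₂.card : ℝ) ≤ 36 * Real.sqrt R₂ * Real.sqrt R₃ := by
    rw [hT₂def]
    exact T2_card_bound N₂ N₃ R₂ R₃ (by linarith) (by linarith)
      (Nat.floor_le (by linarith)) (Nat.floor_le (by linarith))
  have hN₀R : (N₀ : ℝ) ≤ 2 * R₀ := Nat.floor_le (by linarith)
  have hN₁R : (N₁ : ℝ) ≤ 2 * R₁ := Nat.floor_le (by linarith)
  have hchain : (S.ncard : ℝ) ≤ (N₀ : ℝ) * ((N₁ : ℝ) * (T₂.card : ℝ)) := by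
    have : S.ncard ≤ N₀ * (N₁ * T₂.card) := le_trans hn1 (le_trans hn2 (le_of_eq hcardT))
    exact_mod_cast this
  have hfinal : (N₀ : ℝ) * ((N₁ : ℝ) * (T₂.card : ℝ)) ≤
      (2 * R₀) * ((2 * R₁) * (36 * Real.sqrt R₂ * Real.sqrt R₃)) := by
    have hinner : (N₁ : ℝ) * (T₂.card : ℝ) ≤ (2 * R₁) * (36 * Real.sqrt R₂ * Real.sqrt R₃) :=
      mul_le_mul hN₁R hT₂R (Nat.cast_nonneg _) (by linarith)
    exact mul_le_mul hN₀R hinner (mul_nonneg (Nat.cast_nonneg _) (Nat.cast_nonneg _))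
      (by linarith)
  rw [show ((1 : ℝ)/2) = 1 / (2 : ℝ) from rfl, ← Real.sqrt_eq_rpow, ← Real.sqrt_eq_rpow]
  calc (S.ncard : ℝ) ≤ (2 * R₀) * ((2 * R₁) * (36 * Real.sqrt R₂ * Real.sqrt R₃)) :=
        le_trans hchain hfinal
    _ = 144 * R₀ * R₁ * Real.sqrt R₂ * Real.sqrt R₃ := by ring
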